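/- Let m, n, l be natural numbers with n ≥ max(m, l). Then the set of pairs (A, B), where A is an m × n complex matrix and B is an n × l complex matrix, such that rank(A·B) ≠ min(m, l), has Lebesgue measure zero (with respect to the Lebesgue/volume measure on the product of the two matrix spaces, each identified with a finite-dimensional complex coordinate space). -/

import Mathlib

open MeasureTheory

/-- The Lebesgue (volume) measure on the space of `m × n` complex matrices,
identified with the coordinate space `ℂ^{m·n}` (i.e. the pi-type
`Fin m → Fin n → ℂ`). -/
noncomputable instance matrixMeasureSpace (m n : ℕ) :
    MeasureSpace (Matrix (Fin m) (Fin n) ℂ) :=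
  inferInstanceAs (MeasureSpace (Fin m → Fin n → ℂ))


lemma measurable_mveval {ι : Type*} [Fintype ι] (P : MvPolynomial ι ℂ) :
    Measurable fun x : ι → ℂ => MvPolynomial.eval x P := by
  induction P using MvPolynomial.induction_on with
  | C a => simp only [MvPolynomial.eval_C]; exact measurable_const
  | add p q hp hq => simpa [Pi.add_def] using hp.add hq
  | mul_X p i hp => simpa [Pi.mul_def] using hp.mul (measurable_pi_apply i)

lemma poly_null_fin : ∀ (N : ℕ) (P : MvPolynomial (Fin N) ℂ), P ≠ 0 →
    volume {x : Fin N → ℂ | MvPolynomial.eval x P = 0} = 0 := by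
  intro N
  induction N with
  | zero =>
    intro P hP
    convert measure_empty
    · ext x
      simp only [Set.mem_setOf_eq, Set.mem_empty_iff_false, iff_false]
      have hx : x = (fun i => i.elim0) := by funext i; exact i.elim0
      subst hx
      intro h0
      apply hP
      have := (MvPolynomial.isEmptyAlgEquiv ℂ (Fin 0)).injective
      apply this
      rw [map_zero, ← h0]
      conv_rhs => rw [← (MvPolynomial.isEmptyAlgEquiv ℂ (Fin 0)).symm_apply_apply P]
      simp
    · infer_instance
  | succ N ih =>
    intro P hP
    set q := MvPolynomial.finSuccEquiv ℂ N P with hqdef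
    have hq0 : q ≠ 0 := by
      intro h
      exact hP ((map_eq_zero_iff _ (MvPolynomial.finSuccEquiv ℂ N).injective).mp h)
    have hc : q.coeff q.natDegree ≠ 0 := by
      simpa [Polynomial.coeff_natDegree] using Polynomial.leadingCoeff_ne_zero.mpr hq0
    have hbad := ih _ hc
    have hmp := (Measure.measurePreserving_swap (μ := (volume : Measure ℂ))
        (ν := (volume : Measure (Fin N → ℂ)))).comp
        (volume_preserving_piFinSuccAbove (fun _ : Fin (N+1) => ℂ) 0)
    set T : Set ((Fin N → ℂ) × ℂ) :=
      {p | Polynomial.eval p.2 (Polynomial.map (MvPolynomial.eval p.1) q) = 0} with hT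
    have hTeq : T = (fun p : (Fin N → ℂ) × ℂ =>
        MvPolynomial.eval (Fin.cons p.2 p.1) P) ⁻¹' {0} := by
      ext p
      simp [hT, MvPolynomial.eval_eq_eval_mv_eval', hqdef]
    have hTm : MeasurableSet T := by
      rw [hTeq]
      have hm : Measurable fun p : (Fin N → ℂ) × ℂ => (Fin.cons p.2 p.1 : Fin (N+1) → ℂ) := by
        apply measurable_pi_lambda
        intro i
        refine Fin.cases ?_ ?_ i
        · simpa using measurable_snd
        · intro j; exact (measurable_pi_apply j).comp measurable_fst
      exact ((measurable_mveval P).comp hm) (measurableSet_singleton 0)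
    have hset : {x : Fin (N+1) → ℂ | MvPolynomial.eval x P = 0}
        = (Prod.swap ∘ (MeasurableEquiv.piFinSuccAbove (fun _ : Fin (N+1) => ℂ) 0)) ⁻¹' T := by
      ext x
      simp only [Set.mem_preimage, Function.comp_apply, Set.mem_setOf_eq, hTeq,
        MeasurableEquiv.piFinSuccAbove_apply, Prod.swap_prod_mk, Fin.removeNth_zero]
      have hx : (MvPolynomial.eval x) P
          = Polynomial.eval (x 0) (Polynomial.map (MvPolynomial.eval (Fin.tail x)) q) := by
        conv_lhs => rw [← Fin.cons_self_tail x]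
        rw [MvPolynomial.eval_eq_eval_mv_eval', ← hqdef]
      simp [Fin.insertNthEquiv_symm_apply, Fin.removeNth_zero, Fin.cons_self_tail, hx]
    rw [hset, hmp.measure_preimage hTm.nullMeasurableSet, Measure.measure_prod_null hTm]
    have hae : ∀ᵐ y : (Fin N → ℂ) ∂volume, MvPolynomial.eval y (q.coeff q.natDegree) ≠ 0 := by
      rw [ae_iff]
      simpa using hbad
    filter_upwards [hae] with y hy
    have hq' : q.map (MvPolynomial.eval y) ≠ 0 := by
      intro hzero
      apply hy
      have := congrArg (fun r => Polynomial.coeff r q.natDegree) hzero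
      simpa [Polynomial.coeff_map] using this
    have : Prod.mk y ⁻¹' T = {a : ℂ | (q.map (MvPolynomial.eval y)).IsRoot a} := rfl
    rw [this]
    exact Set.Finite.measure_zero (Polynomial.finite_setOf_isRoot hq') volume

lemma poly_null {ι : Type*} [Fintype ι] (P : MvPolynomial ι ℂ) (hP : P ≠ 0) :
    volume {x : ι → ℂ | MvPolynomial.eval x P = 0} = 0 := by
  classical
  set N := Fintype.card ι
  set e := Fintype.equivFin ι with he
  set Q := MvPolynomial.rename e P with hQ
  have hQ0 : Q ≠ 0 := by
    intro h0
    exact hP (MvPolynomial.rename_injective (R := ℂ) e e.injective (by simpa [hQ] using h0))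
  have hZ := poly_null_fin N Q hQ0
  have hZm : MeasurableSet {z : Fin N → ℂ | MvPolynomial.eval z Q = 0} :=
    (measurable_mveval Q) (measurableSet_singleton 0)
  set E := MeasurableEquiv.piCongrLeft (fun _ : Fin N => ℂ) e with hE
  have hmp := volume_measurePreserving_piCongrLeft (fun _ : Fin N => ℂ) e
  have hset : {x : ι → ℂ | MvPolynomial.eval x P = 0}
      = E ⁻¹' {z : Fin N → ℂ | MvPolynomial.eval z Q = 0} := by
    ext x
    simp only [Set.mem_preimage, Set.mem_setOf_eq, hQ, MvPolynomial.eval_rename]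
    have : (E x) ∘ e = x := by
      funext i
      simpa [hE] using MeasurableEquiv.piCongrLeft_apply_apply (β := fun _ => ℂ) e x i
    rw [this]
  rw [hset, hmp.measure_preimage hZm.nullMeasurableSet]
  exact hZ


def kEquiv (m n : ℕ) : (Fin n ⊕ (Fin m × Fin n)) ≃ (Fin (m+1) × Fin n) where
  toFun s := Sum.elim (fun j => ((0 : Fin (m+1)), j)) (fun p => (p.1.succ, p.2)) s
  invFun p := Fin.cases (Sum.inl p.2) (fun i => Sum.inr (i, p.2)) p.1
  left_inv s := by rcases s with j | ⟨i, j⟩ <;> simp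
  right_inv p := by
    rcases p with ⟨i, j⟩
    induction i using Fin.cases <;> simp

lemma mp_uncurry (n : ℕ) : ∀ m : ℕ, MeasurePreserving
    (fun (f : Fin m → Fin n → ℂ) (p : Fin m × Fin n) => f p.1 p.2) volume volume := by
  intro m
  induction m with
  | zero =>
    have hmeas : Measurable (fun (f : Fin 0 → Fin n → ℂ) (p : Fin 0 × Fin n) => f p.1 p.2) := by
      apply measurable_pi_lambda
      intro p
      exact p.1.elim0
    refine ⟨hmeas, ?_⟩
    rw [Measure.volume_pi_eq_dirac (ι := Fin 0), Measure.map_dirac' hmeas,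
      Measure.volume_pi_eq_dirac (ι := Fin 0 × Fin n)]
    congr 1
    exact Subsingleton.elim _ _
  | succ m ih =>
    have h1 := volume_preserving_piFinSuccAbove (fun _ : Fin (m+1) => (Fin n → ℂ)) 0
    have h2 := (MeasurePreserving.id (volume : Measure (Fin n → ℂ))).prod ih
    have h3 := volume_measurePreserving_sumPiEquivProdPi_symm
      (fun _ : Fin n ⊕ (Fin m × Fin n) => ℂ)
    have h4 := volume_measurePreserving_piCongrLeft (fun _ : Fin (m+1) × Fin n => ℂ) (kEquiv m n)
    have hcomp := ((h4.comp h3).comp h2).comp h1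
    convert hcomp using 1
    case e'_3 => rfl
    funext f
    funext p
    obtain ⟨s, rfl⟩ := (kEquiv m n).surjective p
    show _ = (MeasurableEquiv.piCongrLeft (fun _ => ℂ) (kEquiv m n)) _ ((kEquiv m n) s)
    rw [MeasurableEquiv.piCongrLeft_apply_apply]
    rcases s with j | ⟨i, j⟩
    · simp [kEquiv, MeasurableEquiv.coe_sumPiEquivProdPi_symm, Equiv.sumPiEquivProdPi_symm_apply,
        MeasurableEquiv.piFinSuccAbove_apply]
    · simp [kEquiv, MeasurableEquiv.coe_sumPiEquivProdPi_symm, Equiv.sumPiEquivProdPi_symm_apply,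
        MeasurableEquiv.piFinSuccAbove_apply, Fin.removeNth_zero, Fin.tail]

lemma det_submatrix_eq_zero_of_rank_lt {m' l' k : ℕ} (M : Matrix (Fin m') (Fin l') ℂ)
    (row : Fin k → Fin m') (col : Fin k → Fin l') (hr : M.rank < k) :
    (M.submatrix row col).det = 0 := by
  by_contra hdet
  have hUnit : IsUnit (M.submatrix row col) :=
    (Matrix.isUnit_iff_isUnit_det _).mpr (isUnit_iff_ne_zero.mpr hdet)
  have hrk : (M.submatrix row col).rank = k := by
    simpa using Matrix.rank_of_isUnit _ hUnit
  have hPQ : M.submatrix row col =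
      ((1 : Matrix (Fin m') (Fin m') ℂ).submatrix row id * M) *
        (1 : Matrix (Fin l') (Fin l') ℂ).submatrix id col := by
    ext i j
    simp [Matrix.mul_apply, Matrix.one_apply, Finset.sum_ite_eq, Finset.sum_ite_eq']
  have h1 : (M.submatrix row col).rank ≤
      ((1 : Matrix (Fin m') (Fin m') ℂ).submatrix row id * M).rank := by
    rw [hPQ]; exact Matrix.rank_mul_le_left _ _
  have h2 : ((1 : Matrix (Fin m') (Fin m') ℂ).submatrix row id * M).rank ≤ M.rank :=
    Matrix.rank_mul_le_right _ _
  omega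

/-- Measure-theoretic content of Lemma 1: for `n ≥ max m l`, the set of pairs
`(A, B)` of complex matrices with `rank (A·B) ≠ min m l` has Lebesgue measure
zero in the product of the matrix spaces. -/
theorem stmt_2 (m n l : ℕ) (h : n ≥ max m l) :
    volume {p : Matrix (Fin m) (Fin n) ℂ × Matrix (Fin n) (Fin l) ℂ |
      (p.1 * p.2).rank ≠ min m l} = 0 := by
  classical
  have hmn : m ≤ n := le_trans (le_max_left m l) h
  have hln : l ≤ n := le_trans (le_max_right m l) h
  set k := min m l with hk
  set row : Fin k → Fin m := Fin.castLE (min_le_left m l) with hrow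
  set col : Fin k → Fin l := Fin.castLE (min_le_right m l) with hcol
  set Amat : Matrix (Fin m) (Fin n) (MvPolynomial ((Fin m × Fin n) ⊕ (Fin n × Fin l)) ℂ) :=
    Matrix.of fun i t => MvPolynomial.X (Sum.inl (i, t)) with hAmat
  set Bmat : Matrix (Fin n) (Fin l) (MvPolynomial ((Fin m × Fin n) ⊕ (Fin n × Fin l)) ℂ) :=
    Matrix.of fun t j => MvPolynomial.X (Sum.inr (t, j)) with hBmat
  set Pbig : MvPolynomial ((Fin m × Fin n) ⊕ (Fin n × Fin l)) ℂ :=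
    ((Amat * Bmat).submatrix row col).det with hPbig
  set φ : (Matrix (Fin m) (Fin n) ℂ × Matrix (Fin n) (Fin l) ℂ) →
      (((Fin m × Fin n) ⊕ (Fin n × Fin l)) → ℂ) :=
    fun p => (MeasurableEquiv.sumPiEquivProdPi
        (fun _ : (Fin m × Fin n) ⊕ (Fin n × Fin l) => ℂ)).symm
      ((fun q : Fin m × Fin n => p.1 q.1 q.2), (fun q : Fin n × Fin l => p.2 q.1 q.2)) with hφdef
  have hφval : ∀ p, ∀ s, φ p s
      = Sum.elim (fun q : Fin m × Fin n => p.1 q.1 q.2) (fun q : Fin n × Fin l => p.2 q.1 q.2) s := by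
    intro p s
    rcases s with a | b <;>
      simp [hφdef, MeasurableEquiv.coe_sumPiEquivProdPi_symm]
  have hφ : MeasurePreserving φ volume volume := by
    have h3 := volume_measurePreserving_sumPiEquivProdPi_symm
      (fun _ : (Fin m × Fin n) ⊕ (Fin n × Fin l) => ℂ)
    have h12 := (mp_uncurry n m).prod (mp_uncurry l n)
    exact h3.comp h12
  -- evaluation of Pbig
  have hEval : ∀ p : Matrix (Fin m) (Fin n) ℂ × Matrix (Fin n) (Fin l) ℂ,
      MvPolynomial.eval (φ p) Pbig = ((p.1 * p.2).submatrix row col).det := by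
    intro p
    rw [hPbig, RingHom.map_det, RingHom.mapMatrix_apply, ← Matrix.submatrix_map, Matrix.map_mul]
    have hA : Amat.map ⇑(MvPolynomial.eval (φ p)) = p.1 := by
      ext i t; simp [hAmat, hφval]
    have hB : Bmat.map ⇑(MvPolynomial.eval (φ p)) = p.2 := by
      ext t j; simp [hBmat, hφval]
    rw [hA, hB]
  -- Pbig ≠ 0
  have hPne : Pbig ≠ 0 := by
    intro h0
    set A0 : Matrix (Fin m) (Fin n) ℂ := Matrix.of fun i t => if (t : ℕ) = (i : ℕ) then 1 else 0
    set B0 : Matrix (Fin n) (Fin l) ℂ := Matrix.of fun t j => if (t : ℕ) = (j : ℕ) then 1 else 0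
    have h1 : MvPolynomial.eval (φ (A0, B0)) Pbig = 1 := by
      rw [hEval]
      have : (A0 * B0).submatrix row col = (1 : Matrix (Fin k) (Fin k) ℂ) := by
        ext i j
        have hik : ((row i : Fin m) : ℕ) = (i : ℕ) := rfl
        have hjk : ((col j : Fin l) : ℕ) = (j : ℕ) := rfl
        simp only [Matrix.submatrix_apply, Matrix.mul_apply, A0, B0, Matrix.of_apply,
          Matrix.one_apply, hik, hjk]
        rcases eq_or_ne i j with rfl | hij
        · rw [if_pos rfl]
          have hi : ((i : ℕ) : ℕ) < n := lt_of_lt_of_le (lt_of_lt_of_le i.isLt (min_le_left m l)) hmn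
          rw [Finset.sum_eq_single (⟨(i : ℕ), hi⟩ : Fin n)]
          · simp
          · intro t _ ht
            have : ¬ ((t : ℕ) = (i : ℕ)) := by
              intro hc; apply ht; exact Fin.ext hc
            simp [this]
          · intro hmem; exact absurd (Finset.mem_univ _) hmem
        · rw [if_neg hij]
          apply Finset.sum_eq_zero
          intro t _
          rcases eq_or_ne ((t : ℕ)) ((i : ℕ)) with hti | hti
          · have : ¬ ((t : ℕ) = (j : ℕ)) := by
              intro hc
              exact hij (Fin.ext (hti.symm.trans hc))
            simp [this]
          · simp [hti]
      rw [this, Matrix.det_one]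
    rw [h0] at h1
    simp at h1
  -- the inclusion
  have hsub : {p : Matrix (Fin m) (Fin n) ℂ × Matrix (Fin n) (Fin l) ℂ |
        (p.1 * p.2).rank ≠ min m l}
      ⊆ φ ⁻¹' {x | MvPolynomial.eval x Pbig = 0} := by
    intro p hp
    simp only [Set.mem_setOf_eq] at hp
    have hle : (p.1 * p.2).rank ≤ k := by
      refine le_min ?_ ?_
      · exact Matrix.rank_le_height _
      · exact Matrix.rank_le_width _
    have hlt : (p.1 * p.2).rank < k := lt_of_le_of_ne hle hp
    show MvPolynomial.eval (φ p) Pbig = 0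
    rw [hEval]
    exact det_submatrix_eq_zero_of_rank_lt _ _ _ hlt
  refine measure_mono_null hsub ?_
  have hZm : MeasurableSet {x : ((Fin m × Fin n) ⊕ (Fin n × Fin l)) → ℂ |
      MvPolynomial.eval x Pbig = 0} :=
    (measurable_mveval Pbig) (measurableSet_singleton 0)
  rw [hφ.measure_preimage hZm.nullMeasurableSet]
  exact poly_null Pbig hPne
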